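/- For all real x₁, x₂ with 0 < x₁, 0 < x₂ and x₁ + x₂ < 1, the real part of the potential function satisfies Re Φ(x₁, x₂) = (1/π)·[−2Λ(π(x₁+x₂)) + 2Λ(πx₂) + Λ(πx₁)]. -/

import Mathlib

open Real

/-- The dilogarithm `Li₂(z) = -∫₀¹ log(1 - t z)/t dt` (principal branch of `log`). -/
noncomputable def Li2 (z : ℂ) : ℂ :=
  -∫ t in (0:ℝ)..1, Complex.log (1 - (t:ℂ) * z) / (t:ℂ)

/-- The Lobachevsky function `Λ(θ) = -∫₀^θ log|2 sin t| dt`. -/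
noncomputable def Lob (θ : ℝ) : ℝ :=
  -∫ t in (0:ℝ)..θ, Real.log |2 * Real.sin t|

/-- The potential function of the Whitehead link (at `s₁ = s₂ = 1`). -/
noncomputable def Phi0 (z₁ z₂ : ℂ) : ℂ :=
  (1 / (2 * (π:ℂ) * Complex.I)) *
    (Li2 (Complex.exp (-(2 * (π:ℂ) * Complex.I) * (z₁ + z₂)))
     - Li2 (Complex.exp (-(2 * (π:ℂ) * Complex.I) * z₂))
     + Li2 (Complex.exp (2 * (π:ℂ) * Complex.I * z₂))
     - Li2 (Complex.exp (2 * (π:ℂ) * Complex.I * (z₁ + z₂)))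
     + Li2 (Complex.exp (2 * (π:ℂ) * Complex.I * z₁)))

open MeasureTheory intervalIntegral Set Metric

-- log integrable near 0
lemma ii_log01 : IntervalIntegrable Real.log volume 0 1 := by
  have h : IntervalIntegrable (fun t : ℝ => -Real.log t) volume 0 1 := by
    apply intervalIntegrable_deriv_of_nonneg (g := fun t : ℝ => t - t * Real.log t)
    · exact (continuous_id.sub Real.continuous_mul_log).continuousOn
    · intro x hx
      simp only [uIcc_of_le, zero_le_one, min_eq_left, max_eq_right] at hx
      have hx0 : x ≠ 0 := ne_of_gt hx.1
      have h1 : HasDerivAt (fun t : ℝ => t * Real.log t) (Real.log x + 1) x := by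
        have := (hasDerivAt_id x).mul (Real.hasDerivAt_log hx0)
        refine this.congr_deriv ?_
        simp [hx0]
      have := (hasDerivAt_id x).sub h1
      refine this.congr_deriv ?_
      ring
    · intro x hx
      simp only [min_eq_left, max_eq_right, zero_le_one] at hx
      simp only [neg_nonneg]
      exact Real.log_nonpos hx.1.le hx.2.le
  have := h.neg
  simp only [Pi.neg_def] at this
  convert this using 1
  funext t
  simp

lemma ii_log0b {b : ℝ} (hb : 0 ≤ b) : IntervalIntegrable Real.log volume 0 b := by
  rcases le_or_gt b 1 with h | h
  · exact ii_log01.mono_set (by rw [uIcc_of_le hb, uIcc_of_le zero_le_one]; exact Icc_subset_Icc le_rfl h)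
  · exact ii_log01.trans (intervalIntegrable_log (by rw [uIcc_of_le h.le]; intro h0; exact absurd h0.1 (by norm_num)))

lemma ii_logsin_half {x : ℝ} (h0 : 0 ≤ x) (hx : x ≤ π/2) :
    IntervalIntegrable (fun t => Real.log (Real.sin t)) volume 0 x := by
  have hd : IntervalIntegrable (fun t : ℝ => |Real.log t| + Real.log (π/2)) volume 0 x := by
    apply IntervalIntegrable.add _ intervalIntegrable_const
    exact ((ii_log0b h0).abs)
  rw [intervalIntegrable_iff_integrableOn_Ioc_of_le h0] at hd ⊢
  apply hd.mono' ((Real.measurable_log.comp Real.measurable_sin).aestronglyMeasurable)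
  rw [ae_restrict_iff' measurableSet_Ioc]
  refine Filter.Eventually.of_forall (fun t ht => ?_)
  simp only [Function.comp_apply]
  have htpi : t < π := lt_of_le_of_lt (ht.2.trans hx) (by linarith [Real.pi_pos])
  have hs0 : 0 < Real.sin t := Real.sin_pos_of_pos_of_lt_pi ht.1 htpi
  have hs1 : Real.sin t ≤ 1 := Real.sin_le_one t
  have hlb : 2/π * t ≤ Real.sin t := Real.mul_le_sin ht.1.le (ht.2.trans hx)
  have hπ : (0:ℝ) < π := Real.pi_pos
  have hlog : Real.log (2/π * t) ≤ Real.log (Real.sin t) :=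
    Real.log_le_log (mul_pos (by positivity) ht.1) hlb
  rw [Real.log_mul (by positivity) (ne_of_gt ht.1)] at hlog
  have h2π : Real.log (2/π) = -Real.log (π/2) := by
    rw [show (2:ℝ)/π = (π/2)⁻¹ by field_simp, Real.log_inv]
  have habs : ‖Real.log (Real.sin t)‖ = -Real.log (Real.sin t) := by
    rw [Real.norm_eq_abs, abs_of_nonpos (Real.log_nonpos hs0.le hs1)]
  rw [habs]
  rw [h2π] at hlog
  have : -Real.log (Real.sin t) ≤ Real.log (π/2) - Real.log t := by linarith
  calc -Real.log (Real.sin t) ≤ Real.log (π/2) - Real.log t := this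
    _ ≤ |Real.log t| + Real.log (π/2) := by
        have := neg_abs_le (Real.log t); linarith

lemma ii_logsin_upper : IntervalIntegrable (fun t => Real.log (Real.sin t)) volume (π/2) π := by
  have h := (ii_logsin_half (by positivity : (0:ℝ) ≤ π/2) (le_refl _)).comp_sub_left π
  simp only [sub_zero] at h
  rw [show (fun x : ℝ => Real.log (Real.sin (π - x))) = fun t => Real.log (Real.sin t) from funext fun t => by rw [Real.sin_pi_sub], show π - π/2 = π/2 by ring] at h
  exact h.symm

lemma ii_logsin {x : ℝ} (h0 : 0 ≤ x) (hx : x ≤ π) :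
    IntervalIntegrable (fun t => Real.log (Real.sin t)) volume 0 x := by
  rcases le_or_gt x (π/2) with h | h
  · exact ii_logsin_half h0 h
  · refine (ii_logsin_half (by positivity) (le_refl _)).trans (ii_logsin_upper.mono_set ?_)
    rw [uIcc_of_le h.le, uIcc_of_le (by linarith [Real.pi_pos] : π/2 ≤ π)]
    exact Icc_subset_Icc le_rfl hx

lemma ii_log2sin {x : ℝ} (h0 : 0 ≤ x) (hx : x ≤ π) :
    IntervalIntegrable (fun t => Real.log |2 * Real.sin t|) volume 0 x := by
  have hbase : IntervalIntegrable (fun t => Real.log 2 + Real.log (Real.sin t)) volume 0 x :=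
    intervalIntegrable_const.add (ii_logsin h0 hx)
  rw [intervalIntegrable_iff_integrableOn_Ioc_of_le h0] at hbase ⊢
  apply hbase.congr
  have hπ : (volume.restrict (Ioc (0:ℝ) x)) {π} = 0 := by
    refine le_antisymm ?_ zero_le
    calc (volume.restrict (Ioc (0:ℝ) x)) {π} ≤ volume {π} := Measure.restrict_le_self _
      _ = 0 := Real.volume_singleton
  have hne : ∀ᵐ t ∂(volume.restrict (Ioc (0:ℝ) x)), t ≠ π := by
    rw [MeasureTheory.ae_iff]
    convert hπ using 2
    ext t; simp
  filter_upwards [hne, ae_restrict_mem measurableSet_Ioc] with t htne ht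
  have hs : 0 < Real.sin t :=
    Real.sin_pos_of_pos_of_lt_pi ht.1 (lt_of_le_of_ne (ht.2.trans hx) htne)
  rw [show |2 * Real.sin t| = 2 * Real.sin t from abs_of_pos (by linarith),
    Real.log_mul two_ne_zero (ne_of_gt hs)]

lemma integral_logsin_half : ∫ t in (0:ℝ)..(π/2), Real.log (Real.sin t) = -(π/2) * Real.log 2 := by
  have hπ : (0:ℝ) < π := Real.pi_pos
  set I1 := ∫ t in (0:ℝ)..(π/2), Real.log (Real.sin t) with hI1
  have ii1 : IntervalIntegrable (fun t => Real.log (Real.sin t)) volume 0 (π/2) :=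
    ii_logsin (by positivity) (by linarith)
  -- J = I1
  have hJ : ∫ t in (0:ℝ)..(π/2), Real.log (Real.cos t) = I1 := by
    have := intervalIntegral.integral_comp_sub_left (a := 0) (b := π/2)
      (fun t => Real.log (Real.sin t)) (π/2)
    simp only [sub_zero, sub_self] at this
    rw [hI1, ← this]
    congr 1
    funext t
    rw [Real.sin_pi_div_two_sub]
  have iiJ : IntervalIntegrable (fun t => Real.log (Real.cos t)) volume 0 (π/2) := by
    have h := ii1.comp_sub_left (π/2)
    simp only [sub_zero, sub_self] at h
    rw [show (fun x : ℝ => Real.log (Real.sin (π/2 - x))) = fun t => Real.log (Real.cos t)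
      from funext fun t => by rw [Real.sin_pi_div_two_sub]] at h
    exact h.symm
  -- ∫_{π/2}^π log sin = I1
  have hupper : ∫ t in (π/2:ℝ)..π, Real.log (Real.sin t) = I1 := by
    have := intervalIntegral.integral_comp_sub_left (a := 0) (b := π/2)
      (fun t => Real.log (Real.sin t)) π
    simp only [sub_zero] at this
    rw [show π - π/2 = π/2 by ring] at this
    rw [hI1, ← this]
    congr 1
    funext t
    rw [Real.sin_pi_sub]
  have hsplit : ∫ t in (0:ℝ)..π, Real.log (Real.sin t) = I1 + I1 := by
    rw [← intervalIntegral.integral_add_adjacent_intervals ii1 ii_logsin_upper, hupper]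
  have hdouble : ∫ t in (0:ℝ)..(π/2), Real.log (Real.sin (2*t)) = (1/2) * (I1 + I1) := by
    have := intervalIntegral.integral_comp_mul_left (a := 0) (b := π/2)
      (fun t => Real.log (Real.sin t)) (c := 2) two_ne_zero
    rw [mul_zero, show (2:ℝ) * (π/2) = π by ring] at this
    rw [this, hsplit, smul_eq_mul]
    norm_num
  -- a.e. pointwise identity
  have hae : ∫ t in (0:ℝ)..(π/2), (Real.log (Real.sin t) + Real.log (Real.cos t)) =
      ∫ t in (0:ℝ)..(π/2), (Real.log (Real.sin (2*t)) - Real.log 2) := by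
    apply intervalIntegral.integral_congr_ae
    have hpt : ∀ᵐ t ∂volume, t ≠ π/2 := by
      rw [MeasureTheory.ae_iff]
      convert Real.volume_singleton (a := π/2) using 2
      ext t; simp
    filter_upwards [hpt] with t htne ht
    rw [uIoc_of_le (by positivity)] at ht
    have hs : 0 < Real.sin t := Real.sin_pos_of_pos_of_lt_pi ht.1 (by linarith [ht.2])
    have hc : 0 < Real.cos t := Real.cos_pos_of_mem_Ioo
      ⟨by linarith [ht.1], lt_of_le_of_ne ht.2 htne⟩
    rw [← Real.log_mul (ne_of_gt hs) (ne_of_gt hc),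
        show Real.sin t * Real.cos t = (2 * Real.sin t * Real.cos t) / 2 by ring,
        ← Real.sin_two_mul,
        Real.log_div (by rw [Real.sin_two_mul]; positivity) two_ne_zero]
  have hii2t : IntervalIntegrable (fun t => Real.log (Real.sin (2*t))) volume 0 (π/2) := by
    have h := (ii_logsin Real.pi_pos.le (le_refl π)).comp_mul_left (c := 2)
    norm_num at h
    exact h
  have hfinal : I1 + I1 = (1/2) * (I1 + I1) - (π/2) * Real.log 2 := by
    calc I1 + I1 = ∫ t in (0:ℝ)..(π/2), (Real.log (Real.sin t) + Real.log (Real.cos t)) := by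
          rw [intervalIntegral.integral_add ii1 iiJ, hJ]
      _ = ∫ t in (0:ℝ)..(π/2), (Real.log (Real.sin (2*t)) - Real.log 2) := hae
      _ = (∫ t in (0:ℝ)..(π/2), Real.log (Real.sin (2*t))) - ∫ t in (0:ℝ)..(π/2), (Real.log 2 : ℝ) := by
          rw [intervalIntegral.integral_sub hii2t intervalIntegrable_const]
      _ = (1/2) * (I1 + I1) - (π/2) * Real.log 2 := by
          rw [hdouble, intervalIntegral.integral_const, smul_eq_mul, sub_zero]
  linarith

lemma Lob_pi_div_two : Lob (π/2) = 0 := by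
  have hπ : (0:ℝ) < π := Real.pi_pos
  unfold Lob
  have h : ∫ t in (0:ℝ)..(π/2), Real.log |2 * Real.sin t| =
      ∫ t in (0:ℝ)..(π/2), (Real.log 2 + Real.log (Real.sin t)) := by
    apply intervalIntegral.integral_congr_ae
    refine Filter.Eventually.of_forall (fun t ht => ?_)
    rw [uIoc_of_le (by positivity)] at ht
    have hs : 0 < Real.sin t := Real.sin_pos_of_pos_of_lt_pi ht.1 (by linarith [ht.2])
    rw [show |2 * Real.sin t| = 2 * Real.sin t from abs_of_pos (by linarith),
      Real.log_mul two_ne_zero (ne_of_gt hs)]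
  rw [h, intervalIntegral.integral_add intervalIntegrable_const
      (ii_logsin (by positivity) (by linarith)), integral_logsin_half,
      intervalIntegral.integral_const, smul_eq_mul, sub_zero]
  ring

lemma hasDerivAt_Lob {x : ℝ} (h0 : 0 < x) (hx : x < π) :
    HasDerivAt Lob (-Real.log |2 * Real.sin x|) x := by
  have h := intervalIntegral.integral_hasDerivAt_right
    (f := fun t => Real.log |2 * Real.sin t|) (a := 0) (b := x)
    (ii_log2sin h0.le hx.le)
    (((Real.measurable_log.comp ((measurable_const.mul Real.measurable_sin).abs)).aestronglyMeasurable).stronglyMeasurableAtFilter)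
    ?_
  · exact h.neg
  · have hs : Real.sin x ≠ 0 := ne_of_gt (Real.sin_pos_of_pos_of_lt_pi h0 hx)
    have habs : |2 * Real.sin x| ≠ 0 := by simp [hs]
    exact ContinuousAt.log ((continuous_const.mul Real.continuous_sin).abs.continuousAt) habs

lemma normSq_one_sub (t θ : ℝ) :
    Complex.normSq (1 - (t:ℂ) * Complex.exp ((θ:ℂ) * Complex.I)) =
      (1-t)^2 + 2*t*(1 - Real.cos θ) := by
  simp only [Complex.normSq_apply, Complex.sub_re, Complex.sub_im, Complex.one_re,
    Complex.one_im, Complex.mul_re, Complex.mul_im, Complex.ofReal_re, Complex.ofReal_im,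
    Complex.exp_ofReal_mul_I_re, Complex.exp_ofReal_mul_I_im]
  ring_nf
  nlinarith [Real.sin_sq_add_cos_sq θ, sq_nonneg t, sq_abs t]

lemma abs_lb {t θ : ℝ} (ht0 : 0 ≤ t) (ht1 : t ≤ 1) :
    min (1/2) (Real.sqrt (1 - Real.cos θ)) ≤ ‖1 - (t:ℂ) * Complex.exp ((θ:ℂ) * Complex.I)‖ := by
  rcases le_or_gt t (1/2) with h | h
  · refine (min_le_left _ _).trans ?_
    have hn : ‖(1:ℂ)‖ - ‖(t:ℂ) * Complex.exp ((θ:ℂ) * Complex.I)‖ ≤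
        ‖1 - (t:ℂ) * Complex.exp ((θ:ℂ) * Complex.I)‖ := norm_sub_norm_le _ _
    rw [norm_one, norm_mul,
      Complex.norm_exp_ofReal_mul_I, mul_one, Complex.norm_real, Real.norm_eq_abs, abs_of_nonneg ht0] at hn
    linarith
  · refine (min_le_right _ _).trans ?_
    rw [Complex.norm_def]
    apply Real.sqrt_le_sqrt
    rw [normSq_one_sub]
    nlinarith [Real.cos_le_one θ, sq_nonneg (1-t)]

lemma min_pos {θ : ℝ} (hc : Real.cos θ < 1) :
    0 < min (1/2) (Real.sqrt (1 - Real.cos θ)) := by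
  apply lt_min (by norm_num)
  exact Real.sqrt_pos.mpr (by linarith)

lemma re_pos_one_sub {t θ : ℝ} (ht0 : 0 ≤ t) (ht1 : t ≤ 1) (hc : Real.cos θ < 1) :
    0 < (1 - (t:ℂ) * Complex.exp ((θ:ℂ) * Complex.I)).re := by
  simp only [Complex.sub_re, Complex.one_re, Complex.mul_re, Complex.ofReal_re,
    Complex.ofReal_im, Complex.exp_ofReal_mul_I_re, Complex.exp_ofReal_mul_I_im,
    zero_mul, sub_zero]
  nlinarith [Real.neg_one_le_cos θ]

lemma slit_one_sub {t θ : ℝ} (ht0 : 0 ≤ t) (ht1 : t ≤ 1) (hc : Real.cos θ < 1) :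
    1 - (t:ℂ) * Complex.exp ((θ:ℂ) * Complex.I) ∈ Complex.slitPlane :=
  Or.inl (re_pos_one_sub ht0 ht1 hc)

lemma ne_zero_one_sub {t θ : ℝ} (ht0 : 0 ≤ t) (ht1 : t ≤ 1) (hc : Real.cos θ < 1) :
    1 - (t:ℂ) * Complex.exp ((θ:ℂ) * Complex.I) ≠ 0 :=
  Complex.slitPlane_ne_zero (slit_one_sub ht0 ht1 hc)

lemma li2_integrand_integrable {θ : ℝ} (hc : Real.cos θ < 1) :
    IntervalIntegrable
      (fun t : ℝ => Complex.log (1 - (t:ℂ) * Complex.exp ((θ:ℂ) * Complex.I)) / (t:ℂ))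
      volume 0 1 := by
  set e := Complex.exp ((θ:ℂ) * Complex.I) with he
  have hmeas : Measurable (fun t : ℝ => Complex.log (1 - (t:ℂ) * e) / (t:ℂ)) := by
    exact (Complex.measurable_log.comp
      (measurable_const.sub (Complex.measurable_ofReal.mul_const e))).div
      Complex.measurable_ofReal
  have h1 : IntervalIntegrable
      (fun t : ℝ => Complex.log (1 - (t:ℂ) * e) / (t:ℂ)) volume 0 (1/2) := by
    rw [intervalIntegrable_iff_integrableOn_Ioc_of_le (by norm_num)]
    refine Integrable.mono' (g := fun _ : ℝ => (3/2 : ℝ))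
      (integrable_const _) hmeas.aestronglyMeasurable ?_
    rw [ae_restrict_iff' measurableSet_Ioc]
    refine Filter.Eventually.of_forall (fun t ht => ?_)
    have ht0 : 0 < t := ht.1
    have hth : t ≤ 1/2 := ht.2
    have hez : ‖-((t:ℂ) * e)‖ = t := by
      rw [norm_neg, norm_mul,
        Complex.norm_exp_ofReal_mul_I, mul_one, Complex.norm_real, Real.norm_eq_abs, abs_of_nonneg ht0.le]
    have hlog : ‖Complex.log (1 - (t:ℂ) * e)‖ ≤ (3/2) * t := by
      have := Complex.norm_log_one_add_half_le_self (z := -((t:ℂ) * e)) (by rw [hez]; exact hth)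
      rw [hez] at this
      simpa [sub_eq_add_neg] using this
    rw [norm_div, Complex.norm_real, Real.norm_eq_abs, abs_of_nonneg ht0.le]
    rw [div_le_iff₀ ht0]
    calc ‖Complex.log (1 - (t:ℂ) * e)‖ ≤ (3/2) * t := hlog
      _ = 3/2 * t := by ring
  have h2 : IntervalIntegrable
      (fun t : ℝ => Complex.log (1 - (t:ℂ) * e) / (t:ℂ)) volume (1/2) 1 := by
    apply ContinuousOn.intervalIntegrable
    intro t ht
    rw [uIcc_of_le (by norm_num)] at ht
    have ht0 : (0:ℝ) < t := lt_of_lt_of_le (by norm_num) ht.1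
    apply ContinuousWithinAt.div
    · apply ContinuousAt.continuousWithinAt
      have hinner : ContinuousAt (fun s : ℝ => 1 - (s:ℂ) * e) t :=
        (continuous_const.sub (Complex.continuous_ofReal.mul continuous_const)).continuousAt
      exact hinner.clog (slit_one_sub ht0.le ht.2 hc)
    · exact Complex.continuous_ofReal.continuousWithinAt
    · exact_mod_cast ne_of_gt ht0
  exact h1.trans h2

lemma cos_lt_one' {θ : ℝ} (h0 : 0 < θ) (h2 : θ < 2*π) : Real.cos θ < 1 :=
  lt_of_le_of_ne (Real.cos_le_one θ) (fun h => by
    have := (Real.cos_eq_one_iff_of_lt_of_lt (by linarith [Real.pi_pos]) h2).mp h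
    linarith)

lemma intervalIntegral_conj (f : ℝ → ℂ) (a b : ℝ) :
    (starRingEnd ℂ) (∫ t in a..b, f t) = ∫ t in a..b, (starRingEnd ℂ) (f t) := by
  simp only [intervalIntegral, map_sub, integral_conj]

lemma li2_conj {θ : ℝ} (hc : Real.cos θ < 1) :
    Li2 (Complex.exp (-(θ:ℂ) * Complex.I)) = (starRingEnd ℂ) (Li2 (Complex.exp ((θ:ℂ) * Complex.I))) := by
  unfold Li2
  rw [map_neg, intervalIntegral_conj]
  congr 1
  apply intervalIntegral.integral_congr
  intro t ht
  rw [uIcc_of_le zero_le_one] at ht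
  have harg : (1 - (t:ℂ) * Complex.exp ((θ:ℂ) * Complex.I)).arg ≠ π := by
    intro h
    have := Complex.arg_eq_pi_iff.mp h
    linarith [re_pos_one_sub ht.1 ht.2 hc, this.1]
  show Complex.log (1 - (t:ℂ) * Complex.exp (-(θ:ℂ) * Complex.I)) / (t:ℂ) =
    (starRingEnd ℂ) (Complex.log (1 - (t:ℂ) * Complex.exp ((θ:ℂ) * Complex.I)) / (t:ℂ))
  rw [map_div₀, Complex.conj_ofReal, ← Complex.log_conj _ harg, map_sub, map_one, map_mul,
    Complex.conj_ofReal, ← Complex.exp_conj]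
  congr 3
  simp only [map_mul, Complex.conj_ofReal, Complex.conj_I]
  ring

lemma li2_neg_one_im : (Li2 (Complex.exp ((π:ℂ) * Complex.I))).im = 0 := by
  rw [Complex.exp_pi_mul_I]
  unfold Li2
  have h : ∀ t ∈ uIcc (0:ℝ) 1,
      Complex.log (1 - (t:ℂ) * (-1)) / (t:ℂ) = ((Real.log (1+t) / t : ℝ) : ℂ) := by
    intro t ht
    rw [uIcc_of_le zero_le_one] at ht
    have h1 : 1 - (t:ℂ) * (-1) = ((1 + t : ℝ) : ℂ) := by push_cast; ring
    rw [h1, ← Complex.ofReal_log (by linarith [ht.1]), Complex.ofReal_div]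
  rw [intervalIntegral.integral_congr h, intervalIntegral.integral_ofReal]
  simp

lemma hasDerivAt_cexp_mul_I (x : ℝ) :
    HasDerivAt (fun y : ℝ => Complex.exp ((y:ℂ) * Complex.I))
      (Complex.exp ((x:ℂ) * Complex.I) * Complex.I) x := by
  have h : HasDerivAt (fun z : ℂ => Complex.exp (z * Complex.I))
      (Complex.exp ((x:ℂ) * Complex.I) * Complex.I) (x:ℂ) := by
    simpa [Function.comp_def] using (Complex.hasDerivAt_exp ((x:ℂ) * Complex.I)).comp (x:ℂ)
      ((hasDerivAt_id ((x:ℂ))).mul_const Complex.I)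
  exact h.comp_ofReal

lemma quasiconvex_cos {a b x : ℝ} (ha : 0 < a) (hb : b < 2*π) (hx : x ∈ Icc a b) :
    Real.cos x ≤ max (Real.cos a) (Real.cos b) := by
  rcases le_or_gt x π with h | h
  · exact le_max_of_le_left (Real.cos_le_cos_of_nonneg_of_le_pi ha.le h hx.1)
  · apply le_max_of_le_right
    rw [← Real.cos_two_pi_sub x, ← Real.cos_two_pi_sub b]
    exact Real.cos_le_cos_of_nonneg_of_le_pi (by linarith [hx.2]) (by linarith)
      (by linarith [hx.2])

lemma hasDerivAt_li2_exp {θ₀ : ℝ} (h0 : 0 < θ₀) (h2 : θ₀ < 2*π) :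
    HasDerivAt (fun θ : ℝ => Li2 (Complex.exp ((θ:ℂ) * Complex.I)))
      (-Complex.I * Complex.log (1 - Complex.exp ((θ₀:ℂ) * Complex.I))) θ₀ := by
  have hπ : (0:ℝ) < π := Real.pi_pos
  set ε := min θ₀ (2*π - θ₀) / 2 with hε
  have hεpos : 0 < ε := div_pos (lt_min h0 (by linarith)) (by norm_num)
  have hεθ : ε < θ₀ := by
    have h1 : min θ₀ (2*π - θ₀) ≤ θ₀ := min_le_left _ _
    rw [hε]; linarith
  have hεθ2 : θ₀ + ε < 2*π := by
    have h1 : min θ₀ (2*π - θ₀) ≤ 2*π - θ₀ := min_le_right _ _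
    rw [hε]; linarith
  set c := max (Real.cos (θ₀ - ε)) (Real.cos (θ₀ + ε)) with hcdef
  have hc1 : c < 1 := max_lt (cos_lt_one' (by linarith) (by linarith))
    (cos_lt_one' (by linarith) (by linarith))
  set m := min (1/2 : ℝ) (Real.sqrt (1 - c)) with hmdef
  have hm : 0 < m := lt_min (by norm_num) (Real.sqrt_pos.mpr (by linarith))
  have hcosx : ∀ x ∈ ball θ₀ ε, Real.cos x < 1 ∧ Real.cos x ≤ c ∧ 0 < x ∧ x < 2*π := by
    intro x hx
    rw [mem_ball, Real.dist_eq, abs_lt] at hx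
    have hxI : x ∈ Icc (θ₀ - ε) (θ₀ + ε) := ⟨by linarith [hx.1], by linarith [hx.2]⟩
    have h0x : 0 < x := by linarith [hxI.1]
    have hx2 : x < 2*π := by linarith [hxI.2]
    exact ⟨cos_lt_one' h0x hx2, quasiconvex_cos (by linarith) (by linarith) hxI, h0x, hx2⟩
  have habs : ∀ x ∈ ball θ₀ ε, ∀ t : ℝ, 0 ≤ t → t ≤ 1 →
      m ≤ ‖1 - (t:ℂ) * Complex.exp ((x:ℂ) * Complex.I)‖ := by
    intro x hx t ht0 ht1
    refine le_trans ?_ (abs_lb ht0 ht1)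
    apply min_le_min le_rfl
    apply Real.sqrt_le_sqrt
    linarith [(hcosx x hx).2.1]
  have key := intervalIntegral.hasDerivAt_integral_of_dominated_loc_of_deriv_le
    (μ := volume) (a := 0) (b := 1) (x₀ := θ₀) (s := ball θ₀ ε)
    (F := fun (x : ℝ) (t : ℝ) =>
      Complex.log (1 - (t:ℂ) * Complex.exp ((x:ℂ) * Complex.I)) / (t:ℂ))
    (F' := fun (x : ℝ) (t : ℝ) =>
      -Complex.I * Complex.exp ((x:ℂ) * Complex.I) /
        (1 - (t:ℂ) * Complex.exp ((x:ℂ) * Complex.I)))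
    (bound := fun _ => 1/m) (ball_mem_nhds θ₀ hεpos)
    (Filter.Eventually.of_forall (fun x => ((Complex.measurable_log.comp
      (measurable_const.sub (Complex.measurable_ofReal.mul_const _))).div
      Complex.measurable_ofReal).aestronglyMeasurable))
    (li2_integrand_integrable (cos_lt_one' h0 h2))
    ((measurable_const.div (measurable_const.sub
      (Complex.measurable_ofReal.mul_const _))).aestronglyMeasurable)
    ?_ (intervalIntegrable_const) ?_
  · have hfin : (∫ t in (0:ℝ)..1, -Complex.I * Complex.exp ((θ₀:ℂ) * Complex.I) /
        (1 - (t:ℂ) * Complex.exp ((θ₀:ℂ) * Complex.I))) =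
        Complex.I * Complex.log (1 - Complex.exp ((θ₀:ℂ) * Complex.I)) := by
      have hcθ := cos_lt_one' h0 h2
      have heval := intervalIntegral.integral_eq_sub_of_hasDerivAt (a := 0) (b := 1)
        (f := fun t : ℝ => Complex.I *
          Complex.log (1 - (t:ℂ) * Complex.exp ((θ₀:ℂ) * Complex.I)))
        (f' := fun t : ℝ => -Complex.I * Complex.exp ((θ₀:ℂ) * Complex.I) /
          (1 - (t:ℂ) * Complex.exp ((θ₀:ℂ) * Complex.I))) ?_ ?_
      · rw [heval]
        norm_num [Complex.log_one]
      · intro t ht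
        rw [uIcc_of_le zero_le_one] at ht
        have hin : HasDerivAt (fun t : ℝ => 1 - (t:ℂ) * Complex.exp ((θ₀:ℂ) * Complex.I))
            (-Complex.exp ((θ₀:ℂ) * Complex.I)) t := by
          have := (Complex.ofRealCLM.hasDerivAt (x := t)).mul_const
            (Complex.exp ((θ₀:ℂ) * Complex.I))
          have h2' := this.const_sub 1
          refine h2'.congr_deriv ?_
          simp
        have := (hin.clog_real (slit_one_sub ht.1 ht.2 hcθ)).const_mul Complex.I
        refine this.congr_deriv ?_
        field_simp
      · apply ContinuousOn.intervalIntegrable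
        apply ContinuousOn.div continuousOn_const
        · exact (continuous_const.sub (Complex.continuous_ofReal.mul
            continuous_const)).continuousOn
        · intro t ht
          rw [uIcc_of_le zero_le_one] at ht
          exact ne_zero_one_sub ht.1 ht.2 hcθ
    have hD := key.2.neg
    rw [hfin] at hD
    have : -(Complex.I * Complex.log (1 - Complex.exp ((θ₀:ℂ) * Complex.I))) =
        -Complex.I * Complex.log (1 - Complex.exp ((θ₀:ℂ) * Complex.I)) := by ring
    rw [this] at hD
    unfold Li2
    exact hD
  · -- bound
    refine Filter.Eventually.of_forall (fun t ht x hx => ?_)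
    rw [uIoc_of_le zero_le_one] at ht
    have hd := habs x hx t ht.1.le ht.2
    rw [norm_div, norm_mul, norm_neg, Complex.norm_I, Complex.norm_exp_ofReal_mul_I, one_mul]
    exact one_div_le_one_div_of_le hm hd
  · -- differentiability
    refine Filter.Eventually.of_forall (fun t ht x hx => ?_)
    rw [uIoc_of_le zero_le_one] at ht
    have hcx := (hcosx x hx).1
    have hin : HasDerivAt (fun x : ℝ => 1 - (t:ℂ) * Complex.exp ((x:ℂ) * Complex.I))
        (-((t:ℂ) * (Complex.exp ((x:ℂ) * Complex.I) * Complex.I))) x :=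
      ((hasDerivAt_cexp_mul_I x).const_mul (t:ℂ)).const_sub 1
    have hlog := (hin.clog_real (slit_one_sub ht.1.le ht.2 hcx)).div_const (t:ℂ)
    refine hlog.congr_deriv ?_
    have htne : (t:ℂ) ≠ 0 := by exact_mod_cast ne_of_gt ht.1
    have hdne := ne_zero_one_sub ht.1.le ht.2 hcx
    field_simp

lemma HasDerivAt.complex_im {f : ℝ → ℂ} {f' : ℂ} {x : ℝ} (h : HasDerivAt f f' x) :
    HasDerivAt (fun t => (f t).im) f'.im x := by
  simpa [Function.comp_def] using (Complex.imCLM.hasFDerivAt.comp x h.hasFDerivAt).hasDerivAt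

lemma abs_one_sub_exp {θ : ℝ} (h0 : 0 < θ) (h2 : θ < 2*π) :
    ‖1 - Complex.exp ((θ:ℂ) * Complex.I)‖ = |2 * Real.sin (θ/2)| := by
  have hπ : (0:ℝ) < π := Real.pi_pos
  have hs : 0 < Real.sin (θ/2) := Real.sin_pos_of_pos_of_lt_pi (by linarith) (by linarith)
  rw [abs_of_pos (by linarith)]
  have h1 : ‖1 - Complex.exp ((θ:ℂ) * Complex.I)‖ ^ 2 = 2 - 2 * Real.cos θ := by
    rw [Complex.sq_norm]
    have h := normSq_one_sub 1 θ
    rw [show ((1:ℝ):ℂ) = 1 from by norm_num, one_mul] at h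
    rw [h]; ring
  have h2' : (2 * Real.sin (θ/2)) ^ 2 = 2 - 2 * Real.cos θ := by
    have hcs := Real.cos_sq (θ/2)
    have hsc := Real.sin_sq_add_cos_sq (θ/2)
    rw [show 2 * (θ/2) = θ from by ring] at hcs
    nlinarith [hcs, hsc]
  calc ‖1 - Complex.exp ((θ:ℂ) * Complex.I)‖
      = Real.sqrt (‖1 - Complex.exp ((θ:ℂ) * Complex.I)‖ ^ 2) :=
        (Real.sqrt_sq (norm_nonneg _)).symm
    _ = Real.sqrt ((2 * Real.sin (θ/2)) ^ 2) := by rw [h1, h2']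
    _ = 2 * Real.sin (θ/2) := Real.sqrt_sq (by linarith)

lemma im_li2_exp {θ : ℝ} (h0 : 0 < θ) (h2 : θ < 2*π) :
    (Li2 (Complex.exp ((θ:ℂ) * Complex.I))).im = 2 * Lob (θ/2) := by
  have hπ : (0:ℝ) < π := Real.pi_pos
  set D := fun θ : ℝ => (Li2 (Complex.exp ((θ:ℂ) * Complex.I))).im - 2 * Lob (θ/2) with hD
  have hderiv : ∀ x ∈ Ioo 0 (2*π), HasDerivAt D 0 x := by
    intro x hx
    have hA := (hasDerivAt_li2_exp hx.1 hx.2).complex_im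
    have hval : (-Complex.I * Complex.log (1 - Complex.exp ((x:ℂ) * Complex.I))).im =
        -Real.log |2 * Real.sin (x/2)| := by
      rw [← abs_one_sub_exp hx.1 hx.2]
      have : (-Complex.I * Complex.log (1 - Complex.exp ((x:ℂ) * Complex.I))).im =
          -(Complex.log (1 - Complex.exp ((x:ℂ) * Complex.I))).re := by
        simp [Complex.mul_im]
      rw [this, Complex.log_re]
    rw [hval] at hA
    have hB : HasDerivAt (fun θ : ℝ => 2 * Lob (θ/2)) (-Real.log |2 * Real.sin (x/2)|) x := by
      have hl := hasDerivAt_Lob (x := x/2) (by linarith [hx.1]) (by linarith [hx.2])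
      have hc := hl.comp x ((hasDerivAt_id x).div_const 2)
      have h := hc.const_mul (2:ℝ)
      simp only [Function.comp_def, id_eq] at h
      refine h.congr_deriv ?_
      ring
    have := hA.sub hB
    exact this.congr_deriv (by simp)
  have hconst : ∀ x ∈ Ioo 0 (2*π), D x = D π := by
    intro x hx
    have hπmem : π ∈ Ioo 0 (2*π) := ⟨hπ, by linarith⟩
    apply Convex.is_const_of_fderivWithin_eq_zero (convex_Ioo 0 (2*π))
      (fun y hy => ((hderiv y hy).differentiableAt).differentiableWithinAt) _ hx hπmem
    intro y hy
    rw [fderivWithin_of_isOpen isOpen_Ioo hy]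
    have := (hderiv y hy).hasFDerivAt.fderiv
    rw [this]
    ext v
    simp
  have hDπ : D π = 0 := by
    rw [hD]
    simp only []
    rw [li2_neg_one_im, Lob_pi_div_two]
    ring
  have := hconst θ ⟨h0, h2⟩
  rw [hDπ] at this
  have : (Li2 (Complex.exp ((θ:ℂ) * Complex.I))).im - 2 * Lob (θ/2) = 0 := this
  linarith

theorem stmt_1 (x₁ x₂ : ℝ) (h1 : 0 < x₁) (h2 : 0 < x₂) (h3 : x₁ + x₂ < 1) :
    (Phi0 (x₁:ℂ) (x₂:ℂ)).re =
      (1/π) * (-2 * Lob (π*(x₁+x₂)) + 2 * Lob (π*x₂) + Lob (π*x₁)) := by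
  have hπ : (0:ℝ) < π := Real.pi_pos
  set α := 2*π*(x₁+x₂) with hα
  set β := 2*π*x₂ with hβ
  set γ := 2*π*x₁ with hγ
  have hα0 : 0 < α := by positivity
  have hα2 : α < 2*π := by rw [hα]; nlinarith
  have hβ0 : 0 < β := by positivity
  have hβ2 : β < 2*π := by rw [hβ]; nlinarith
  have hγ0 : 0 < γ := by positivity
  have hγ2 : γ < 2*π := by rw [hγ]; nlinarith
  have e1 : Complex.exp (-(2 * (π:ℂ) * Complex.I) * ((x₁:ℂ) + (x₂:ℂ))) =
      Complex.exp (-(α:ℂ) * Complex.I) := by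
    congr 1; rw [hα]; push_cast; ring
  have e2 : Complex.exp (-(2 * (π:ℂ) * Complex.I) * (x₂:ℂ)) =
      Complex.exp (-(β:ℂ) * Complex.I) := by
    congr 1; rw [hβ]; push_cast; ring
  have e3 : Complex.exp (2 * (π:ℂ) * Complex.I * (x₂:ℂ)) =
      Complex.exp ((β:ℂ) * Complex.I) := by
    congr 1; rw [hβ]; push_cast; ring
  have e4 : Complex.exp (2 * (π:ℂ) * Complex.I * ((x₁:ℂ) + (x₂:ℂ))) =
      Complex.exp ((α:ℂ) * Complex.I) := by
    congr 1; rw [hα]; push_cast; ring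
  have e5 : Complex.exp (2 * (π:ℂ) * Complex.I * (x₁:ℂ)) =
      Complex.exp ((γ:ℂ) * Complex.I) := by
    congr 1; rw [hγ]; push_cast; ring
  rw [Phi0, e1, e2, e3, e4, e5, li2_conj (cos_lt_one' hα0 hα2), li2_conj (cos_lt_one' hβ0 hβ2)]
  set A := Li2 (Complex.exp ((α:ℂ) * Complex.I)) with hA
  set B := Li2 (Complex.exp ((β:ℂ) * Complex.I)) with hB
  set C := Li2 (Complex.exp ((γ:ℂ) * Complex.I)) with hC
  have hre : ∀ w : ℂ, ((1 / (2 * (π:ℂ) * Complex.I)) * w).re = w.im / (2*π) := by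
    intro w
    have hpne : (π:ℂ) ≠ 0 := by exact_mod_cast ne_of_gt hπ
    have h1 : (1 / (2 * (π:ℂ) * Complex.I)) = ((-(1/(2*π)) : ℝ) : ℂ) * Complex.I := by
      field_simp
      ring_nf
      rw [Complex.I_sq]
      ring
      push_cast; field_simp
    rw [h1]
    rw [mul_assoc, Complex.re_ofReal_mul]
    have : (Complex.I * w).re = -w.im := by simp [Complex.mul_re]
    rw [this]
    field_simp
  rw [hre]
  have him : ((starRingEnd ℂ) A - (starRingEnd ℂ) B + B - A + C).im =
      -2 * A.im + 2 * B.im + C.im := by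
    simp [Complex.sub_im, Complex.add_im, Complex.conj_im]
    ring
  rw [him, im_li2_exp hα0 hα2, im_li2_exp hβ0 hβ2, im_li2_exp hγ0 hγ2]
  rw [show α/2 = π*(x₁+x₂) by rw [hα]; ring, show β/2 = π*x₂ by rw [hβ]; ring,
    show γ/2 = π*x₁ by rw [hγ]; ring]
  field_simp
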